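/- Let d ≥ 2 and X be the S_d-orbit of the vector (0,1,1,...,1,2) (one 0, one 2, and d−2 ones) in (Z/nZ)^d. Then for every y = (y_1,...,y_d), σ_X(y) = e([y]/n)·(|Σ_{j=1}^d e(y_j/n)|² − d), where [y] = y_1 + ⋯ + y_d mod n. -/

import Mathlib

open Finset

/-- `e n z` = exp(2πi·z/n) for `z : ZMod n`. -/
noncomputable def e (n : ℕ) (z : ZMod n) : ℂ :=
  Complex.exp (2 * Real.pi * Complex.I * z.val / n)

lemma exp_mod (n : ℕ) (hn : n ≠ 0) (m : ℕ) :
    Complex.exp (2 * Real.pi * Complex.I * ((m % n : ℕ) : ℂ) / n) =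
    Complex.exp (2 * Real.pi * Complex.I * (m : ℂ) / n) := by
  conv_rhs => rw [← Nat.div_add_mod m n]
  have hnc : (n : ℂ) ≠ 0 := Nat.cast_ne_zero.mpr hn
  have key : (2 * Real.pi * Complex.I * (((n * (m / n) + m % n : ℕ)) : ℂ) / n : ℂ)
      = ((m / n : ℕ) : ℂ) * (2 * Real.pi * Complex.I) + 2 * Real.pi * Complex.I * ((m % n : ℕ) : ℂ) / n := by
    push_cast
    field_simp
  rw [key, Complex.exp_add,
    show ((m / n : ℕ) : ℂ) * (2 * Real.pi * Complex.I) = ((m / n : ℕ) : ℤ) * (2 * Real.pi * Complex.I) by norm_cast,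
    Complex.exp_int_mul_two_pi_mul_I, one_mul]

lemma e_add (n : ℕ) [NeZero n] (a b : ZMod n) : e n (a + b) = e n a * e n b := by
  unfold e
  rw [ZMod.val_add, exp_mod n (NeZero.ne n), ← Complex.exp_add]
  congr 1
  have hnc : (n : ℂ) ≠ 0 := Nat.cast_ne_zero.mpr (NeZero.ne n)
  push_cast
  field_simp

lemma e_zero (n : ℕ) [NeZero n] : e n 0 = 1 := by
  simp [e, ZMod.val_zero]

lemma e_ne_zero (n : ℕ) (z : ZMod n) : e n z ≠ 0 := Complex.exp_ne_zero _

lemma conj_e (n : ℕ) (z : ZMod n) : (starRingEnd ℂ) (e n z) = (e n z)⁻¹ := by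
  unfold e
  rw [← Complex.exp_conj, ← Complex.exp_neg]
  congr 1
  simp [map_div₀, map_ofNat]
  ring

/-- Dot product on `(ZMod n)^d`. -/
def dot {n d : ℕ} (x y : Fin d → ZMod n) : ZMod n := ∑ i, x i * y i

/-- The orbit `S_d · x` of `x` under coordinate permutation, as a `Finset`. -/
noncomputable def orbit (n d : ℕ) (x : Fin d → ZMod n) : Finset (Fin d → ZMod n) :=
  Finset.image (fun π : Equiv.Perm (Fin d) => x ∘ π) Finset.univ

/-- The symmetric supercharacter attached to the orbit of `x`. -/
noncomputable def σ (n d : ℕ) (x y : Fin d → ZMod n) : ℂ :=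
  ∑ v ∈ orbit n d x, e n (dot v y)

def vv (n : ℕ) {d : ℕ} (i j : Fin d) : Fin d → ZMod n :=
  fun k => if k = i then 0 else if k = j then 2 else 1

lemma comp_eq {n d : ℕ} (hd : 2 ≤ d) (π : Equiv.Perm (Fin d)) :
    (fun i : Fin d => if (i : ℕ) = 0 then (0 : ZMod n) else if (i : ℕ) = 1 then 2 else 1) ∘ π
      = vv n (π.symm ⟨0, by omega⟩) (π.symm ⟨1, by omega⟩) := by
  funext k
  simp only [Function.comp_apply, vv]
  have h0 : ((π k : Fin d) : ℕ) = 0 ↔ k = π.symm ⟨0, by omega⟩ := by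
    rw [Equiv.eq_symm_apply, Fin.ext_iff]
  have h1 : ((π k : Fin d) : ℕ) = 1 ↔ k = π.symm ⟨1, by omega⟩ := by
    rw [Equiv.eq_symm_apply, Fin.ext_iff]
  rw [if_congr h0 rfl rfl, if_congr h1 rfl rfl]

lemma orbit_eq (n d : ℕ) (hd : 2 ≤ d) :
    orbit n d (fun i : Fin d => if (i : ℕ) = 0 then (0 : ZMod n) else if (i : ℕ) = 1 then 2 else 1)
      = Finset.image (fun p : Fin d × Fin d => vv n p.1 p.2) Finset.univ.offDiag := by
  have h01 : (⟨0, by omega⟩ : Fin d) ≠ ⟨1, by omega⟩ := by simp [Fin.ext_iff]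
  ext v
  simp only [orbit, Finset.mem_image, Finset.mem_univ, true_and, Finset.mem_offDiag,
    Prod.exists]
  constructor
  · rintro ⟨π, rfl⟩
    refine ⟨π.symm ⟨0, by omega⟩, π.symm ⟨1, by omega⟩, ?_, (comp_eq hd π).symm⟩
    simp only [ne_eq]
    first
    | exact ⟨trivial, trivial, fun h => h01 (π.symm.injective h)⟩
    | exact fun h => h01 (π.symm.injective h)
  · rintro ⟨i, j, hmem, rfl⟩
    have hij : i ≠ j := by
      first
      | exact hmem.2.2
      | exact hmem
    set i0 : Fin d := ⟨0, by omega⟩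
    set i1 : Fin d := ⟨1, by omega⟩
    have hk : Equiv.swap i0 i i1 ≠ i := by
      intro h
      exact h01 (Equiv.injective _ (by rw [h, Equiv.swap_apply_left]))
    set τ : Equiv.Perm (Fin d) := (Equiv.swap i0 i).trans (Equiv.swap (Equiv.swap i0 i i1) j)
    have hτ0 : τ i0 = i := by
      simp only [τ, Equiv.trans_apply, Equiv.swap_apply_left]
      exact Equiv.swap_apply_of_ne_of_ne (Ne.symm hk) hij
    have hτ1 : τ i1 = j := by
      simp only [τ, Equiv.trans_apply, Equiv.swap_apply_left]
    refine ⟨τ.symm, ?_⟩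
    rw [comp_eq hd τ.symm]
    simp only [Equiv.symm_symm]
    rw [hτ0, hτ1]

lemma vv_inj {n d : ℕ} (hn : 3 ≤ n) {i j i' j' : Fin d} (hij : i ≠ j) (hij' : i' ≠ j')
    (h : vv n i j = vv n i' j') : i = i' ∧ j = j' := by
  have h1 : (1 : ZMod n) ≠ 0 := by
    intro hc
    have := congrArg ZMod.val hc
    rw [show (1 : ZMod n) = ((1:ℕ) : ZMod n) by norm_cast,
      ZMod.val_cast_of_lt (by omega)] at this
    simp [ZMod.val_zero] at this
  have h2 : (2 : ZMod n) ≠ 0 := by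
    intro hc
    have := congrArg ZMod.val hc
    rw [show (2 : ZMod n) = ((2:ℕ) : ZMod n) by norm_cast,
      ZMod.val_cast_of_lt (by omega)] at this
    simp [ZMod.val_zero] at this
  have h21 : (2 : ZMod n) ≠ 1 := by
    intro hc
    have := congrArg ZMod.val hc
    rw [show (2 : ZMod n) = ((2:ℕ) : ZMod n) by norm_cast,
      ZMod.val_cast_of_lt (by omega),
      show (1 : ZMod n) = ((1:ℕ) : ZMod n) by norm_cast,
      ZMod.val_cast_of_lt (by omega)] at this
    omega
  have hii : i = i' := by
    by_contra hne
    have := congrFun h i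
    simp only [vv, if_pos rfl, if_neg hne] at this
    by_cases hji : i = j' <;> simp [hji] at this <;> [exact h2 this.symm; exact h1 this.symm]
  subst hii
  refine ⟨rfl, ?_⟩
  by_contra hne
  have := congrFun h j
  simp only [vv, if_neg (Ne.symm hij), if_pos rfl, if_neg (Ne.symm hij), if_neg hne] at this
  exact h21 this

lemma dot_vv {n d : ℕ} {i j : Fin d} (hij : i ≠ j) (y : Fin d → ZMod n) :
    dot (vv n i j) y = (∑ k, y k) + y j - y i := by
  unfold dot
  have key : ∀ k : Fin d, vv n i j k * y k
      = y k + (if k = j then y j else 0) - (if k = i then y i else 0) := by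
    intro k
    unfold vv
    by_cases hki : k = i
    · subst hki
      rw [if_pos rfl, if_pos rfl, if_neg hij]
      ring
    · by_cases hkj : k = j
      · subst hkj
        rw [if_neg hki, if_pos rfl, if_pos rfl, if_neg hki]
        ring
      · rw [if_neg hki, if_neg hkj, if_neg hkj, if_neg hki]
        ring
  rw [Finset.sum_congr rfl (fun k _ => key k), Finset.sum_sub_distrib, Finset.sum_add_distrib]
  simp

lemma e_factor (n : ℕ) [NeZero n] (S a b : ZMod n) :
    e n (S + a - b) = e n S * e n a * (starRingEnd ℂ) (e n b) := by
  have h : e n (S + a - b) * e n b = e n S * e n a := by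
    rw [← e_add, ← e_add]
    congr 1
    ring
  rw [conj_e]
  field_simp [e_ne_zero]
  linear_combination h

lemma diag_sum {d : ℕ} (G : Fin d × Fin d → ℂ) :
    ∑ p ∈ Finset.univ.diag, G p = ∑ i : Fin d, G (i, i) := by
  have : (Finset.univ.diag : Finset (Fin d × Fin d))
      = Finset.image (fun i => (i, i)) Finset.univ := by
    ext p
    simp only [Finset.mem_diag, Finset.mem_image, Finset.mem_univ, true_and]
    constructor
    · intro h; obtain ⟨a, b⟩ := p; cases h; exact ⟨a, rfl⟩
    · rintro ⟨a, rfl⟩; rfl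
  rw [this, Finset.sum_image (by intro a _ b _ h; exact (Prod.mk.injEq _ _ _ _ ▸ h).1)]

theorem stmt_14 (n d : ℕ) (hn : 3 ≤ n) (hd : 2 ≤ d)
    (x : Fin d → ZMod n)
    (hx : x = fun i : Fin d => if (i : ℕ) = 0 then 0 else if (i : ℕ) = 1 then 2 else 1) :
    ∀ y : Fin d → ZMod n,
      σ n d x y =
        e n (∑ i, y i) * ((‖∑ i, e n (y i)‖ ^ 2 - d : ℝ) : ℂ) := by
  subst hx
  intro y
  haveI : NeZero n := ⟨by omega⟩
  set S : ZMod n := ∑ i, y i with hS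
  set T : ℂ := ∑ i, e n (y i) with hT
  set G : Fin d × Fin d → ℂ :=
    fun p => e n S * e n (y p.2) * (starRingEnd ℂ) (e n (y p.1)) with hG
  unfold σ
  rw [orbit_eq n d hd]
  rw [Finset.sum_image (by
    intro p hp q hq hpq
    rw [Finset.mem_coe, Finset.mem_offDiag] at hp hq
    obtain ⟨h1, h2⟩ := vv_inj hn hp.2.2 hq.2.2 hpq
    exact Prod.ext h1 h2)]
  have hre : ∑ p ∈ Finset.univ.offDiag, e n (dot (vv n p.1 p.2) y)
      = ∑ p ∈ Finset.univ.offDiag, G p := by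
    refine Finset.sum_congr rfl fun p hp => ?_
    rw [Finset.mem_offDiag] at hp
    rw [dot_vv hp.2.2, e_factor]
  have hsplit : ∑ p ∈ (Finset.univ ×ˢ Finset.univ), G p
      = ∑ p ∈ Finset.univ.diag, G p + ∑ p ∈ Finset.univ.offDiag, G p := by
    rw [← Finset.diag_union_offDiag, Finset.sum_union (Finset.disjoint_diag_offDiag _)]
  have htotal : ∑ p ∈ (Finset.univ ×ˢ Finset.univ), G p
      = e n S * ((‖T‖ ^ 2 : ℝ) : ℂ) := by
    rw [Finset.sum_product]
    have hrow : ∀ i : Fin d, ∑ j, G (i, j) = e n S * T * (starRingEnd ℂ) (e n (y i)) := by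
      intro i
      simp only [hG]
      rw [← Finset.sum_mul, ← Finset.mul_sum]
    rw [Finset.sum_congr rfl fun i _ => hrow i, ← Finset.mul_sum, ← map_sum, ← hT,
      mul_assoc, Complex.mul_conj]
    congr 1
    norm_cast
    exact (Complex.sq_norm T).symm
  have hdiag : ∑ p ∈ Finset.univ.diag, G p = (d : ℂ) * e n S := by
    rw [diag_sum]
    have hGd : ∀ i : Fin d, G (i, i) = e n S := by
      intro i
      simp only [hG]
      rw [conj_e, mul_assoc, mul_inv_cancel₀ (e_ne_zero _ _), mul_one]
    rw [Finset.sum_congr rfl fun i _ => hGd i, Finset.sum_const, Finset.card_univ,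
      Fintype.card_fin, nsmul_eq_mul]
  rw [hre]
  have hoff : ∑ p ∈ Finset.univ.offDiag, G p
      = e n S * ((‖T‖ ^ 2 : ℝ) : ℂ) - (d : ℂ) * e n S := by
    rw [← htotal, ← hdiag, hsplit]; ring
  rw [hoff]
  push_cast
  ring
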